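/- For the non-stationary switch process starting in state −1, let P₋(t) = P(D(t) = 1 | δ = −1). Then for all s > 0, ℒ(P₋)(s) = Ψ₋(s)(1 − Ψ₊(s)) / ( s (1 − Ψ₊(s) Ψ₋(s)) ). -/

import Mathlib

open MeasureTheory Set ProbabilityTheory

/-- Bounded measurable functions on a probability space are integrable. -/
lemma aux_integrable_bdd {Ω : Type*} [MeasurableSpace Ω] {μ : Measure Ω}
    [IsProbabilityMeasure μ] {f : Ω → ℝ} (hf : Measurable f)
    (h0 : ∀ ω, 0 ≤ f ω) (h1 : ∀ ω, f ω ≤ 1) : Integrable f μ := by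
  refine Integrable.mono' (integrable_const 1) hf.aestronglyMeasurable ?_
  filter_upwards with ω
  rw [Real.norm_eq_abs, abs_of_nonneg (h0 ω)]
  exact h1 ω

/-- Integral of a finite product of independent, `[0,1]`-valued random variables. -/
lemma aux_integral_prod {Ω ι : Type*} [MeasurableSpace Ω] {μ : Measure Ω}
    [IsProbabilityMeasure μ] (f : ι → Ω → ℝ) (hmeas : ∀ i, Measurable (f i))
    (h0 : ∀ i ω, 0 ≤ f i ω) (h1 : ∀ i ω, f i ω ≤ 1)
    (hind : iIndepFun f μ) (T : Finset ι) :
    ∫ ω, ∏ i ∈ T, f i ω ∂μ = ∏ i ∈ T, ∫ ω, f i ω ∂μ := by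
  classical
  induction T using Finset.cons_induction with
  | empty => simp
  | cons i T hi ih =>
    have hIF : IndepFun (∏ j ∈ T, f j) (f i) μ :=
      hind.indepFun_finset_prod_of_notMem hmeas hi
    have hint1 : Integrable (∏ j ∈ T, f j) μ := by
      have : (∏ j ∈ T, f j) = fun ω => ∏ j ∈ T, f j ω := by
        funext ω; simp
      rw [this]
      exact aux_integrable_bdd (Finset.measurable_prod _ fun j _ => hmeas j)
        (fun ω => Finset.prod_nonneg fun j _ => h0 j ω)
        (fun ω => Finset.prod_le_one (fun j _ => h0 j ω) (fun j _ => h1 j ω))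
    have hint2 : Integrable (f i) μ := aux_integrable_bdd (hmeas i) (h0 i) (h1 i)
    have hmul := hIF.integral_mul_eq_mul_integral hint1.aestronglyMeasurable hint2.aestronglyMeasurable
    have heq : ((∏ j ∈ T, f j) * f i) = fun ω => ∏ j ∈ Finset.cons i T hi, f j ω := by
      funext ω
      rw [Finset.prod_cons, Pi.mul_apply, Finset.prod_apply, mul_comm]
    rw [heq] at hmul
    have heq2 : integral μ (∏ j ∈ T, f j) = ∫ ω, ∏ j ∈ T, f j ω ∂μ := by
      congr 1; funext ω; simp
    rw [hmul, heq2, ih, Finset.prod_cons, mul_comm]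

/-- The exponential lintegral over `Ico a b`. -/
lemma aux_lintegral_Ico {s a b : ℝ} (hs : 0 < s) (hab : a ≤ b) :
    ∫⁻ t in Set.Ico a b, ENNReal.ofReal (Real.exp (-s * t))
      = ENNReal.ofReal ((Real.exp (-s * a) - Real.exp (-s * b)) / s) := by
  have hcont : Continuous fun t : ℝ => Real.exp (-s * t) :=
    Real.continuous_exp.comp (continuous_const.mul continuous_id)
  have h1 : ∫⁻ t in Set.Ico a b, ENNReal.ofReal (Real.exp (-s * t))
      = ∫⁻ t in Set.Ioc a b, ENNReal.ofReal (Real.exp (-s * t)) :=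
    setLIntegral_congr (Ico_ae_eq_Ioc)
  rw [h1, ← ofReal_integral_eq_lintegral_ofReal
      (hcont.integrableOn_Ioc)
      (Filter.Eventually.of_forall fun t => (Real.exp_pos _).le)]
  congr 1
  rw [← intervalIntegral.integral_of_le hab]
  have hderiv : ∀ t ∈ Set.uIcc a b,
      HasDerivAt (fun u => -(Real.exp (-s * u) / s)) (Real.exp (-s * t)) t := by
    intro t _
    have h1' : HasDerivAt (fun u : ℝ => -s * u) (-s) t := by
      simpa using (hasDerivAt_id t).const_mul (-s)
    have h2 := (Real.hasDerivAt_exp (-s * t)).comp t h1'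
    have h3 := (h2.div_const s).neg
    rw [show Real.exp (-s * t) = -(Real.exp (-s * t) * -s / s) by field_simp]
    exact h3
  rw [intervalIntegral.integral_eq_sub_of_hasDerivAt hderiv
    (hcont.intervalIntegrable a b)]
  field_simp
  ring

/-- Laplace transform of `P₋(t) = P(D(t) = 1 | δ = −1)` for the
non-stationary switch process started in state `−1`: the first sojourn is `T₋`, the
process alternates, `D(t) = 1` iff the number of switches `N(t)` in `(0,t]` is odd, and
`ℒ(P₋)(s) = Ψ₋(s)(1 − Ψ₊(s)) / (s (1 − Ψ₊(s) Ψ₋(s)))`. -/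
theorem laplace_Pminus
    {Ω : Type*} [MeasurableSpace Ω] (μ : Measure Ω) [IsProbabilityMeasure μ]
    (Tp Tm : ℕ → Ω → ℝ)
    (hTpm : ∀ i, Measurable (Tp i)) (hTmm : ∀ i, Measurable (Tm i))
    (hTp0 : ∀ i ω, 0 < Tp i ω) (hTm0 : ∀ i ω, 0 < Tm i ω)
    (hindep : iIndepFun (fun i : ℕ ⊕ ℕ => Sum.elim Tp Tm i) μ)
    (hidp : ∀ i, IdentDistrib (Tp i) (Tp 0) μ μ)
    (hidm : ∀ i, IdentDistrib (Tm i) (Tm 0) μ μ)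
    (hcontp : ∀ c : ℝ, μ {ω | Tp 0 ω = c} = 0)
    (hcontm : ∀ c : ℝ, μ {ω | Tm 0 ω = c} = 0)
    (S : ℕ → Ω → ℝ)
    (hS : ∀ k ω, S k ω =
      (∑ i ∈ Finset.range ((k + 1) / 2), Tm i ω) + ∑ i ∈ Finset.range (k / 2), Tp i ω)
    (N : ℝ → Ω → ℕ) (hN : ∀ t ω, N t ω = sSup {k | S k ω ≤ t})
    (Pm : ℝ → ℝ) (hPm : ∀ t, Pm t = (μ {ω | Odd (N t ω)}).toReal)
    (Ψp Ψm : ℝ → ℝ)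
    (hΨp : ∀ s, Ψp s = ∫ ω, Real.exp (-s * Tp 0 ω) ∂μ)
    (hΨm : ∀ s, Ψm s = ∫ ω, Real.exp (-s * Tm 0 ω) ∂μ)
    (s : ℝ) (hs : 0 < s) :
    ∫ t in Ioi (0:ℝ), Pm t * Real.exp (-s * t)
      = Ψm s * (1 - Ψp s) / (s * (1 - Ψp s * Ψm s)) := by
  classical
  have hexp_meas : Measurable fun x : ℝ => Real.exp (-s * x) :=
    Real.measurable_exp.comp (measurable_id.const_mul (-s))
  -- measurability of S k
  have hSm : ∀ k, Measurable (S k) := by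
    intro k
    have : S k = fun ω => (∑ i ∈ Finset.range ((k + 1) / 2), Tm i ω)
        + ∑ i ∈ Finset.range (k / 2), Tp i ω := funext (hS k)
    rw [this]
    exact (Finset.measurable_sum _ fun i _ => hTmm i).add
      (Finset.measurable_sum _ fun i _ => hTpm i)
  -- strict monotonicity
  have hstep : ∀ k ω, S k ω < S (k + 1) ω := by
    intro k ω
    rcases Nat.even_or_odd k with ⟨m, hm⟩ | ⟨m, hm⟩
    · subst hm
      rw [hS, hS]
      have h1 : (m + m + 1 + 1) / 2 = m + 1 := by omega
      have h2 : (m + m + 1) / 2 = m := by omega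
      have h3 : (m + m) / 2 = m := by omega
      rw [h1, h2, h3, Finset.sum_range_succ (fun i => Tm i ω) m]
      have := hTm0 m ω; linarith
    · subst hm
      rw [hS, hS]
      have h1 : (2 * m + 1 + 1 + 1) / 2 = m + 1 := by omega
      have h2 : (2 * m + 1 + 1) / 2 = m + 1 := by omega
      have h3 : (2 * m + 1) / 2 = m := by omega
      rw [h1, h2, h3, Finset.sum_range_succ (fun i => Tp i ω) m]
      have := hTp0 m ω; linarith
  have hmono : ∀ ω, StrictMono fun k => S k ω :=
    fun ω => strictMono_nat_of_lt_succ fun k => hstep k ω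
  have hS0 : ∀ ω, S 0 ω = 0 := by intro ω; rw [hS]; simp
  have hSpos : ∀ k ω, 0 < k → 0 < S k ω := by
    intro k ω hk
    have h := hmono ω hk
    simpa [hS0 ω] using h
  have hSle : ∀ k l, k ≤ l → ∀ ω, S k ω ≤ S l ω :=
    fun k l hkl ω => (hmono ω).monotone hkl
  -- the key characterization of the odd event
  have hkey : ∀ t (ω : Ω), Odd (N t ω) ↔
      ∃ j : ℕ, S (2 * j + 1) ω ≤ t ∧ t < S (2 * j + 2) ω := by
    intro t ω
    rw [hN]
    constructor
    · rintro ⟨j, hj⟩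
      by_cases hbdd : BddAbove {k | S k ω ≤ t}
      · have hne : {k | S k ω ≤ t}.Nonempty := by
          by_contra hne
          rw [Set.not_nonempty_iff_eq_empty] at hne
          rw [hne, csSup_empty] at hj
          have hb : (⊥ : ℕ) = 0 := rfl
          rw [hb] at hj; omega
        have hmem := Nat.sSup_mem hne hbdd
        rw [hj] at hmem
        refine ⟨j, hmem, ?_⟩
        by_contra hc
        push_neg at hc
        have h2 : (2 * j + 2 : ℕ) ∈ {k | S k ω ≤ t} := hc
        have := le_csSup hbdd h2
        rw [hj] at this
        omega
      · rw [csSup_of_not_bddAbove hbdd, csSup_empty] at hj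
        have hb : (⊥ : ℕ) = 0 := rfl
        rw [hb] at hj; omega
    · rintro ⟨j, h1, h2⟩
      have hset : {k | S k ω ≤ t} = Set.Iic (2 * j + 1) := by
        ext k
        simp only [Set.mem_setOf_eq, Set.mem_Iic]
        constructor
        · intro hk
          by_contra hc
          push_neg at hc
          have : S (2 * j + 2) ω ≤ S k ω := hSle _ _ (by omega) ω
          linarith
        · intro hk
          calc S k ω ≤ S (2 * j + 1) ω := hSle _ _ hk ω
            _ ≤ t := h1
      rw [hset, csSup_Iic]
      exact ⟨j, rfl⟩
  -- the product-measurable event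
  set E : ℕ → Set (ℝ × Ω) :=
    fun j => {p | S (2 * j + 1) p.2 ≤ p.1 ∧ p.1 < S (2 * j + 2) p.2} with hE
  have hEmeas : ∀ j, MeasurableSet (E j) := by
    intro j
    have : E j = {p : ℝ × Ω | S (2 * j + 1) p.2 ≤ p.1}
        ∩ {p : ℝ × Ω | p.1 < S (2 * j + 2) p.2} := by
      ext p; simp [hE, Set.mem_setOf_eq]
    rw [this]
    exact (measurableSet_le ((hSm _).comp measurable_snd) measurable_fst).inter
      (measurableSet_lt measurable_fst ((hSm _).comp measurable_snd))
  set G : Set (ℝ × Ω) := ⋃ j, E j with hG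
  have hGmeas : MeasurableSet G := MeasurableSet.iUnion hEmeas
  have hslice : ∀ t : ℝ, {ω | Odd (N t ω)} = Prod.mk t ⁻¹' G := by
    intro t
    ext ω
    simp only [Set.mem_setOf_eq, Set.mem_preimage, hG, Set.mem_iUnion, hE, hkey t ω]
  have hslice_meas : ∀ t : ℝ, MeasurableSet {ω | Odd (N t ω)} := by
    intro t
    rw [hslice]
    exact hGmeas.preimage measurable_prodMk_left
  -- the ℝ≥0∞-valued integrand on the product space
  set F : ℝ × Ω → ENNReal :=
    G.indicator (fun p => ENNReal.ofReal (Real.exp (-s * p.1))) with hF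
  have hFmeas : Measurable F :=
    (ENNReal.measurable_ofReal.comp (hexp_meas.comp measurable_fst)).indicator hGmeas
  -- inner ω-integral
  have hinner_ω : ∀ t : ℝ, ∫⁻ ω, F (t, ω) ∂μ
      = ENNReal.ofReal (Real.exp (-s * t)) * μ {ω | Odd (N t ω)} := by
    intro t
    have heq : ∀ ω, F (t, ω) = (Prod.mk t ⁻¹' G).indicator
        (fun _ => ENNReal.ofReal (Real.exp (-s * t))) ω := by
      intro ω
      simp only [hF, Set.indicator_apply, Set.mem_preimage]
    simp only [heq]
    rw [lintegral_indicator (hGmeas.preimage measurable_prodMk_left) _,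
      setLIntegral_const, hslice]
  -- inner t-integral
  have hinner_t : ∀ ω : Ω, ∫⁻ t in Set.Ioi (0:ℝ), F (t, ω)
      = ∑' j : ℕ, ENNReal.ofReal
          ((Real.exp (-s * S (2 * j + 1) ω) - Real.exp (-s * S (2 * j + 2) ω)) / s) := by
    intro ω
    set A : Set ℝ := ⋃ j : ℕ, Set.Ico (S (2 * j + 1) ω) (S (2 * j + 2) ω) with hA
    have hAj : ∀ j : ℕ, MeasurableSet (Set.Ico (S (2 * j + 1) ω) (S (2 * j + 2) ω)) :=
      fun j => measurableSet_Ico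
    have hAmeas : MeasurableSet A := MeasurableSet.iUnion hAj
    have heq : ∀ t, F (t, ω) = A.indicator
        (fun t => ENNReal.ofReal (Real.exp (-s * t))) t := by
      intro t
      have : (t, ω) ∈ G ↔ t ∈ A := by
        simp only [hG, hA, Set.mem_iUnion, hE, Set.mem_setOf_eq, Set.mem_Ico]
      simp only [hF, Set.indicator_apply, this]
    have hsub : A ⊆ Set.Ioi (0:ℝ) := by
      intro t ht
      rw [hA, Set.mem_iUnion] at ht
      obtain ⟨j, hj⟩ := ht
      have := hSpos (2 * j + 1) ω (by omega)
      exact lt_of_lt_of_le this hj.1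
    simp only [heq]
    rw [lintegral_indicator hAmeas _, Measure.restrict_restrict hAmeas,
      Set.inter_eq_self_of_subset_left hsub, hA]
    have hdisj : Pairwise (Function.onFun Disjoint
        fun j : ℕ => Set.Ico (S (2 * j + 1) ω) (S (2 * j + 2) ω)) := by
      intro i j hij
      have key : ∀ i j : ℕ, i < j → Disjoint (Set.Ico (S (2 * i + 1) ω) (S (2 * i + 2) ω))
          (Set.Ico (S (2 * j + 1) ω) (S (2 * j + 2) ω)) := by
        intro i j hij'
        refine Set.disjoint_left.mpr fun x hx hx' => ?_
        have h1 : S (2 * i + 2) ω ≤ S (2 * j + 1) ω := hSle _ _ (by omega) ω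
        have := hx.2
        have := hx'.1
        linarith
      rcases lt_or_gt_of_ne hij with h | h
      · exact key i j h
      · exact (key j i h).symm
    rw [lintegral_iUnion hAj hdisj]
    congr 1
    funext j
    exact aux_lintegral_Ico hs (hSle _ _ (by omega) ω)
  -- the moments of S k
  have hmoment : ∀ k : ℕ, ∫ ω, Real.exp (-s * S k ω) ∂μ
      = Ψm s ^ ((k + 1) / 2) * Ψp s ^ (k / 2) := by
    intro k
    set g : ℕ ⊕ ℕ → Ω → ℝ := fun i ω => Real.exp (-s * Sum.elim Tp Tm i ω) with hg
    have hgmeas : ∀ i, Measurable (g i) := by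
      rintro (i | i)
      · exact hexp_meas.comp (hTpm i)
      · exact hexp_meas.comp (hTmm i)
    have hg0 : ∀ i ω, 0 ≤ g i ω := fun i ω => (Real.exp_pos _).le
    have hg1 : ∀ i ω, g i ω ≤ 1 := by
      rintro (i | i) ω
      · exact Real.exp_le_one_iff.mpr
          (by simp only [Sum.elim_inl]; nlinarith [hTp0 i ω])
      · exact Real.exp_le_one_iff.mpr
          (by simp only [Sum.elim_inr]; nlinarith [hTm0 i ω])
    have hgind : iIndepFun g μ :=
      hindep.comp (fun _ => fun x : ℝ => Real.exp (-s * x)) (fun _ => hexp_meas)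
    have hinjr : Set.InjOn (Sum.inr : ℕ → ℕ ⊕ ℕ) (Finset.range ((k + 1) / 2)) :=
      fun x _ y _ h => Sum.inr.inj h
    have hinjl : Set.InjOn (Sum.inl : ℕ → ℕ ⊕ ℕ) (Finset.range (k / 2)) :=
      fun x _ y _ h => Sum.inl.inj h
    set T : Finset (ℕ ⊕ ℕ) := ((Finset.range ((k + 1) / 2)).image Sum.inr)
      ∪ ((Finset.range (k / 2)).image Sum.inl) with hT
    have hdisj : Disjoint ((Finset.range ((k + 1) / 2)).image (Sum.inr : ℕ → ℕ ⊕ ℕ))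
        ((Finset.range (k / 2)).image (Sum.inl : ℕ → ℕ ⊕ ℕ)) := by
      rw [Finset.disjoint_left]
      rintro a ha hb
      simp only [Finset.mem_image] at ha hb
      obtain ⟨x, _, hx⟩ := ha
      obtain ⟨y, _, hy⟩ := hb
      rw [← hx] at hy
      exact Sum.inl_ne_inr hy
    have hprod : ∀ ω, Real.exp (-s * S k ω) = ∏ i ∈ T, g i ω := by
      intro ω
      rw [hS, mul_add, Real.exp_add, Finset.mul_sum, Finset.mul_sum,
        Real.exp_sum, Real.exp_sum, hT, Finset.prod_union hdisj,
        Finset.prod_image hinjr, Finset.prod_image hinjl]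
      rfl
    have hvr : ∀ i : ℕ, ∫ ω, g (Sum.inr i) ω ∂μ = Ψm s := by
      intro i
      have hid := (hidm i).comp hexp_meas
      rw [hΨm]
      exact hid.integral_eq
    have hvl : ∀ i : ℕ, ∫ ω, g (Sum.inl i) ω ∂μ = Ψp s := by
      intro i
      have hid := (hidp i).comp hexp_meas
      rw [hΨp]
      exact hid.integral_eq
    calc ∫ ω, Real.exp (-s * S k ω) ∂μ = ∫ ω, ∏ i ∈ T, g i ω ∂μ := by
          congr 1; funext ω; exact hprod ω
      _ = ∏ i ∈ T, ∫ ω, g i ω ∂μ := aux_integral_prod g hgmeas hg0 hg1 hgind T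
      _ = Ψm s ^ ((k + 1) / 2) * Ψp s ^ (k / 2) := by
          rw [hT, Finset.prod_union hdisj, Finset.prod_image hinjr,
            Finset.prod_image hinjl,
            Finset.prod_congr rfl (fun i _ => hvr i),
            Finset.prod_congr rfl (fun i _ => hvl i),
            Finset.prod_const, Finset.prod_const, Finset.card_range, Finset.card_range]
  -- integrability of exp(-s S k)
  have hintS : ∀ k : ℕ, Integrable (fun ω => Real.exp (-s * S k ω)) μ := by
    intro k
    refine aux_integrable_bdd (hexp_meas.comp (hSm k)) (fun ω => (Real.exp_pos _).le) ?_
    intro ω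
    have h0 : 0 ≤ S k ω := by
      rcases Nat.eq_zero_or_pos k with h | h
      · rw [h, hS0]
      · exact (hSpos k ω h).le
    exact Real.exp_le_one_iff.mpr (by nlinarith)
  -- the per-j ω-lintegral
  have hjint : ∀ j : ℕ, ∫⁻ ω, ENNReal.ofReal
        ((Real.exp (-s * S (2 * j + 1) ω) - Real.exp (-s * S (2 * j + 2) ω)) / s) ∂μ
      = ENNReal.ofReal ((Ψm s ^ (j + 1) * Ψp s ^ j - Ψm s ^ (j + 1) * Ψp s ^ (j + 1)) / s) := by
    intro j
    have hnn : 0 ≤ᵐ[μ] fun ω =>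
        (Real.exp (-s * S (2 * j + 1) ω) - Real.exp (-s * S (2 * j + 2) ω)) / s := by
      filter_upwards with ω
      have hle : S (2 * j + 1) ω ≤ S (2 * j + 2) ω := hSle _ _ (by omega) ω
      have : Real.exp (-s * S (2 * j + 2) ω) ≤ Real.exp (-s * S (2 * j + 1) ω) :=
        Real.exp_le_exp.mpr (by nlinarith)
      have := sub_nonneg.mpr this
      positivity
    have hint : Integrable (fun ω =>
        (Real.exp (-s * S (2 * j + 1) ω) - Real.exp (-s * S (2 * j + 2) ω)) / s) μ :=
      ((hintS (2 * j + 1)).sub (hintS (2 * j + 2))).div_const s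
    rw [← ofReal_integral_eq_lintegral_ofReal hint hnn]
    congr 1
    rw [integral_div, integral_sub (hintS (2 * j + 1)) (hintS (2 * j + 2)),
      hmoment, hmoment]
    simp only [show (2 * j + 1 + 1) / 2 = j + 1 from by omega,
      show (2 * j + 1) / 2 = j from by omega,
      show (2 * j + 2 + 1) / 2 = j + 1 from by omega,
      show (2 * j + 2) / 2 = j + 1 from by omega]
  -- bounds on Ψp s, Ψm s
  have ha0 : 0 ≤ Ψp s := by
    rw [hΨp]; exact integral_nonneg fun ω => (Real.exp_pos _).le
  have hb0 : 0 ≤ Ψm s := by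
    rw [hΨm]; exact integral_nonneg fun ω => (Real.exp_pos _).le
  have hintp : Integrable (fun ω => Real.exp (-s * Tp 0 ω)) μ :=
    aux_integrable_bdd (hexp_meas.comp (hTpm 0)) (fun ω => (Real.exp_pos _).le)
      (fun ω => Real.exp_le_one_iff.mpr (by nlinarith [hTp0 0 ω]))
  have hintm : Integrable (fun ω => Real.exp (-s * Tm 0 ω)) μ :=
    aux_integrable_bdd (hexp_meas.comp (hTmm 0)) (fun ω => (Real.exp_pos _).le)
      (fun ω => Real.exp_le_one_iff.mpr (by nlinarith [hTm0 0 ω]))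
  have hb1 : Ψm s ≤ 1 := by
    rw [hΨm]
    calc ∫ ω, Real.exp (-s * Tm 0 ω) ∂μ ≤ ∫ _, (1:ℝ) ∂μ :=
          integral_mono hintm (integrable_const 1)
            (fun ω => Real.exp_le_one_iff.mpr (by nlinarith [hTm0 0 ω]))
      _ = 1 := by simp
  have ha1 : Ψp s < 1 := by
    have hnn : 0 ≤ fun ω => 1 - Real.exp (-s * Tp 0 ω) := by
      intro ω
      have : Real.exp (-s * Tp 0 ω) ≤ 1 :=
        Real.exp_le_one_iff.mpr (by nlinarith [hTp0 0 ω])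
      simpa using this
    have hint1 : Integrable (fun ω => 1 - Real.exp (-s * Tp 0 ω)) μ :=
      (integrable_const 1).sub hintp
    have hsupp : Function.support (fun ω => 1 - Real.exp (-s * Tp 0 ω)) = Set.univ := by
      ext ω
      simp only [Function.mem_support, Set.mem_univ, iff_true]
      have : Real.exp (-s * Tp 0 ω) < 1 := by
        rw [Real.exp_lt_one_iff]
        nlinarith [hTp0 0 ω]
      intro h
      rw [sub_eq_zero] at h
      linarith
    have hpos : 0 < ∫ ω, (1 - Real.exp (-s * Tp 0 ω)) ∂μ := by
      rw [integral_pos_iff_support_of_nonneg hnn hint1, hsupp]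
      simp
    rw [integral_sub (integrable_const 1) hintp] at hpos
    simp only [integral_const, measure_univ, ENNReal.toReal_one, probReal_univ, smul_eq_mul, mul_one,
      one_smul] at hpos
    rw [hΨp]
    linarith
  have hab1 : Ψp s * Ψm s < 1 := by nlinarith
  have hab0 : 0 ≤ Ψp s * Ψm s := mul_nonneg ha0 hb0
  -- the series
  have hc : ∀ j : ℕ, (Ψm s ^ (j + 1) * Ψp s ^ j - Ψm s ^ (j + 1) * Ψp s ^ (j + 1)) / s
      = (Ψm s * (1 - Ψp s) / s) * (Ψp s * Ψm s) ^ j := by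
    intro j
    rw [pow_succ]
    ring
  have hcnn : ∀ j : ℕ,
      0 ≤ (Ψm s ^ (j + 1) * Ψp s ^ j - Ψm s ^ (j + 1) * Ψp s ^ (j + 1)) / s := by
    intro j
    rw [hc j]
    have h1 : 0 ≤ 1 - Ψp s := by linarith
    positivity
  have hsummable : Summable fun j : ℕ =>
      (Ψm s ^ (j + 1) * Ψp s ^ j - Ψm s ^ (j + 1) * Ψp s ^ (j + 1)) / s := by
    have : Summable fun j : ℕ => (Ψm s * (1 - Ψp s) / s) * (Ψp s * Ψm s) ^ j :=
      (summable_geometric_of_lt_one hab0 hab1).mul_left _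
    exact this.congr fun j => (hc j).symm
  have htsum : ∑' j : ℕ,
        (Ψm s ^ (j + 1) * Ψp s ^ j - Ψm s ^ (j + 1) * Ψp s ^ (j + 1)) / s
      = Ψm s * (1 - Ψp s) / (s * (1 - Ψp s * Ψm s)) := by
    calc ∑' j : ℕ, (Ψm s ^ (j + 1) * Ψp s ^ j - Ψm s ^ (j + 1) * Ψp s ^ (j + 1)) / s
        = ∑' j : ℕ, (Ψm s * (1 - Ψp s) / s) * (Ψp s * Ψm s) ^ j := by
          congr 1; funext j; exact hc j
      _ = (Ψm s * (1 - Ψp s) / s) * (1 - Ψp s * Ψm s)⁻¹ := by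
          rw [tsum_mul_left, tsum_geometric_of_lt_one hab0 hab1]
      _ = Ψm s * (1 - Ψp s) / (s * (1 - Ψp s * Ψm s)) := by
          have hBne : 1 - Ψp s * Ψm s ≠ 0 := by linarith
          field_simp
  -- Tonelli
  have hFae : AEMeasurable (Function.uncurry fun (t : ℝ) (ω : Ω) => F (t, ω))
      ((volume.restrict (Set.Ioi (0:ℝ))).prod μ) := by
    have : (Function.uncurry fun (t : ℝ) (ω : Ω) => F (t, ω)) = F := rfl
    rw [this]
    exact hFmeas.aemeasurable
  have hswap : ∫⁻ t in Set.Ioi (0:ℝ), ∫⁻ ω, F (t, ω) ∂μ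
      = ∫⁻ ω, (∫⁻ t in Set.Ioi (0:ℝ), F (t, ω)) ∂μ :=
    lintegral_lintegral_swap hFae
  -- compute the ω-side
  have hrhs : ∫⁻ ω, (∫⁻ t in Set.Ioi (0:ℝ), F (t, ω)) ∂μ
      = ENNReal.ofReal (Ψm s * (1 - Ψp s) / (s * (1 - Ψp s * Ψm s))) := by
    have h1 : ∫⁻ ω, (∫⁻ t in Set.Ioi (0:ℝ), F (t, ω)) ∂μ
        = ∫⁻ ω, ∑' j : ℕ, ENNReal.ofReal
            ((Real.exp (-s * S (2 * j + 1) ω) - Real.exp (-s * S (2 * j + 2) ω)) / s) ∂μ := by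
      congr 1; funext ω; exact hinner_t ω
    have hmeasj : ∀ j : ℕ, AEMeasurable (fun ω => ENNReal.ofReal
        ((Real.exp (-s * S (2 * j + 1) ω) - Real.exp (-s * S (2 * j + 2) ω)) / s)) μ := by
      intro j
      exact (ENNReal.measurable_ofReal.comp
        (((hexp_meas.comp (hSm (2 * j + 1))).sub
          (hexp_meas.comp (hSm (2 * j + 2)))).div_const s)).aemeasurable
    rw [h1, lintegral_tsum hmeasj]
    calc ∑' j : ℕ, ∫⁻ ω, ENNReal.ofReal
          ((Real.exp (-s * S (2 * j + 1) ω) - Real.exp (-s * S (2 * j + 2) ω)) / s) ∂μ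
        = ∑' j : ℕ, ENNReal.ofReal
            ((Ψm s ^ (j + 1) * Ψp s ^ j - Ψm s ^ (j + 1) * Ψp s ^ (j + 1)) / s) := by
          congr 1; funext j; exact hjint j
      _ = ENNReal.ofReal (∑' j : ℕ,
            (Ψm s ^ (j + 1) * Ψp s ^ j - Ψm s ^ (j + 1) * Ψp s ^ (j + 1)) / s) :=
          (ENNReal.ofReal_tsum_of_nonneg hcnn hsummable).symm
      _ = ENNReal.ofReal (Ψm s * (1 - Ψp s) / (s * (1 - Ψp s * Ψm s))) := by rw [htsum]
  -- compute the t-side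
  have hPmnn : ∀ t, 0 ≤ Pm t := fun t => by rw [hPm]; exact ENNReal.toReal_nonneg
  have hPmmeas : Measurable fun t => Pm t * Real.exp (-s * t) := by
    have h1 : Measurable fun t : ℝ => μ (Prod.mk t ⁻¹' G) :=
      measurable_measure_prodMk_left hGmeas
    have h2 : (fun t => Pm t) = fun t => (μ (Prod.mk t ⁻¹' G)).toReal := by
      funext t; rw [hPm, hslice]
    have h3 : Measurable fun t => Pm t := by rw [h2]; exact h1.ennreal_toReal
    exact h3.mul hexp_meas
  have hlhs : ∫⁻ t in Set.Ioi (0:ℝ), ∫⁻ ω, F (t, ω) ∂μ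
      = ∫⁻ t in Set.Ioi (0:ℝ), ENNReal.ofReal (Pm t * Real.exp (-s * t)) := by
    apply lintegral_congr
    intro t
    rw [hinner_ω t, ENNReal.ofReal_mul (hPmnn t)]
    rw [hPm, ENNReal.ofReal_toReal (measure_ne_top μ _)]
    ring
  -- put everything together
  have hbochner : ∫ t in Set.Ioi (0:ℝ), Pm t * Real.exp (-s * t)
      = (∫⁻ t in Set.Ioi (0:ℝ), ENNReal.ofReal (Pm t * Real.exp (-s * t))).toReal := by
    apply integral_eq_lintegral_of_nonneg_ae
    · filter_upwards with t
      exact mul_nonneg (hPmnn t) (Real.exp_pos _).le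
    · exact hPmmeas.aestronglyMeasurable
  rw [hbochner, ← hlhs, hswap, hrhs, ENNReal.toReal_ofReal]
  have h1 : 0 ≤ 1 - Ψp s := by linarith
  have h2 : 0 ≤ 1 - Ψp s * Ψm s := by linarith
  positivity
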